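/- Let K be the attractor of the IFS f_j(x) = λx + d_j on ℝ, j = 1,...,ℓ, with 0 < λ < 1 and 0 = d₁ < d₂ < ... < d_ℓ, and suppose K has positive Lebesgue measure. Then liminf_{n→∞} L(K ∩ [0, λⁿ))/λⁿ ≥ c for some constant c > 0, where L denotes Lebesgue measure. -/
import Mathlib


open MeasureTheory Filter Set Pointwise
open scoped ENNReal

noncomputable section

/-- for the attractor K of the IFS `f_j(x) = λx + d_j` (with `d₁ = 0`)
of positive Lebesgue measure, `liminf_n L(K ∩ [0,λⁿ))/λⁿ ≥ c > 0`. -/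
theorem stmt11 (ℓ : ℕ) (hℓ : 0 < ℓ) (lam : ℝ) (hlam : 0 < lam) (hlam1 : lam < 1)
    (d : Fin ℓ → ℝ) (hd0 : d ⟨0, hℓ⟩ = 0) (hdmono : StrictMono d)
    (K : Set ℝ) (hKne : K.Nonempty) (hKc : IsCompact K)
    (hKattr : K = ⋃ j : Fin ℓ, (fun x => lam * x + d j) '' K)
    (hKpos : 0 < volume K) :
    ∃ c : ℝ, 0 < c ∧
      ENNReal.ofReal c ≤
        liminf (fun n : ℕ => volume (K ∩ Ico 0 (lam ^ n)) / ENNReal.ofReal (lam ^ n)) atTop := by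
  -- K is closed under multiplication by lam
  have hmul : ∀ x ∈ K, lam * x ∈ K := by
    intro x hx
    have : lam * x + d ⟨0, hℓ⟩ ∈ ⋃ j : Fin ℓ, (fun y => lam * y + d j) '' K := by
      exact mem_iUnion.mpr ⟨⟨0, hℓ⟩, ⟨x, hx, rfl⟩⟩
    rw [← hKattr] at this
    simpa [hd0] using this
  have hpow : ∀ n : ℕ, ∀ x ∈ K, lam ^ n * x ∈ K := by
    intro n
    induction n with
    | zero => intro x hx; simpa using hx
    | succ n ih =>
      intro x hx
      have := hmul _ (ih x hx)
      rw [← mul_assoc] at this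
      simpa [pow_succ, mul_comm] using this
  -- K ⊆ [0, ∞)
  have hnn : ∀ x ∈ K, 0 ≤ x := by
    set a := sInf K with ha_def
    have haK : a ∈ K := hKc.sInf_mem hKne
    have ha' : a ∈ ⋃ j : Fin ℓ, (fun y => lam * y + d j) '' K := hKattr ▸ haK
    obtain ⟨j, x, hx, hfx⟩ := mem_iUnion.mp ha'
    have hdj : 0 ≤ d j := by
      rw [← hd0]
      exact hdmono.monotone (by exact Fin.mk_le_of_le_val (Nat.zero_le _))
    have hxa : a ≤ x := csInf_le hKc.bddBelow hx
    have ha0 : 0 ≤ a := by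
      have h1 : lam * x + d j = a := hfx
      nlinarith
    intro x hx
    exact le_trans ha0 (csInf_le hKc.bddBelow hx)
  -- K is bounded above by some r > 0
  obtain ⟨r, hr0, hKr⟩ : ∃ r : ℝ, 0 < r ∧ ∀ x ∈ K, x < r := by
    obtain ⟨M, hM⟩ := hKc.bddAbove
    refine ⟨M + 1, ?_, fun x hx => ?_⟩
    · obtain ⟨x, hx⟩ := hKne
      have := hnn x hx
      have := hM hx
      linarith
    · have := hM hx; linarith
  -- choose m with lam ^ m * r < 1
  obtain ⟨m, hm⟩ := exists_pow_lt_of_lt_one (show (0:ℝ) < 1 / r by positivity) hlam1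
  have hmr : lam ^ m * r < 1 := by
    rw [lt_div_iff₀ hr0] at hm; linarith
  have hKvol : volume K ≠ ⊤ := hKc.measure_lt_top.ne
  refine ⟨lam ^ m * (volume K).toReal, mul_pos (pow_pos hlam m) (ENNReal.toReal_pos hKpos.ne' hKvol), ?_⟩
  have hofc : ENNReal.ofReal (lam ^ m * (volume K).toReal)
      = ENNReal.ofReal (lam ^ m) * volume K := by
    rw [ENNReal.ofReal_mul (by positivity), ENNReal.ofReal_toReal hKvol]
  rw [hofc]
  have hbound : ∀ n : ℕ,
      ENNReal.ofReal (lam ^ m) * volume K ≤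
        volume (K ∩ Ico 0 (lam ^ n)) / ENNReal.ofReal (lam ^ n) := by
    intro n
    have hsub : (lam ^ (n + m)) • K ⊆ K ∩ Ico 0 (lam ^ n) := by
      rintro y ⟨x, hx, rfl⟩
      simp only [smul_eq_mul]
      refine ⟨hpow _ x hx, ⟨mul_nonneg (by positivity) (hnn x hx), ?_⟩⟩
      · have hxr := hKr x hx
        have hx0 := hnn x hx
        calc lam ^ (n + m) * x ≤ lam ^ (n + m) * r := by
              apply mul_le_mul_of_nonneg_left (le_of_lt hxr) (by positivity)
          _ = lam ^ n * (lam ^ m * r) := by rw [pow_add]; ring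
          _ < lam ^ n * 1 := by
              apply mul_lt_mul_of_pos_left hmr (by positivity)
          _ = lam ^ n := mul_one _
    have hvsmul : volume ((lam ^ (n + m)) • K)
        = ENNReal.ofReal (lam ^ (n + m)) * volume K := by
      rw [Measure.addHaar_smul]
      congr
      simp [abs_of_nonneg (by positivity : (0:ℝ) ≤ lam ^ (n + m))]
    have hle : ENNReal.ofReal (lam ^ (n + m)) * volume K ≤ volume (K ∩ Ico 0 (lam ^ n)) := by
      rw [← hvsmul]; exact measure_mono hsub
    have hne0 : ENNReal.ofReal (lam ^ n) ≠ 0 := by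
      simp [ENNReal.ofReal_eq_zero, not_le, pow_pos hlam]
    have hnetop : ENNReal.ofReal (lam ^ n) ≠ ⊤ := ENNReal.ofReal_ne_top
    rw [ENNReal.le_div_iff_mul_le (Or.inl hne0) (Or.inl hnetop)]
    calc ENNReal.ofReal (lam ^ m) * volume K * ENNReal.ofReal (lam ^ n)
        = ENNReal.ofReal (lam ^ (n + m)) * volume K := by
          rw [pow_add, ENNReal.ofReal_mul (by positivity)]; ring
      _ ≤ _ := hle
  calc ENNReal.ofReal (lam ^ m) * volume K
      = liminf (fun _ : ℕ => ENNReal.ofReal (lam ^ m) * volume K) atTop :=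
        (liminf_const _).symm
    _ ≤ _ := liminf_le_liminf (Eventually.of_forall hbound)
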